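/- Let d > 0 be a real number and define δ_T(u) = −2√d · exp((2 − u)/(2√d)) for u ∈ ℝ. Then: (i) δ_T′(u) = exp((2 − u)/(2√d)), which is strictly positive and strictly decreasing in u; (ii) δ_T is strictly increasing and concave on ℝ; (iii) for any unit vectors z_i, z_j ∈ ℝ^m (‖z_i‖₂ = ‖z_j‖₂ = 1), one has exp(⟨z_i, z_j⟩/√d) = δ_T′(‖z_i − z_j‖₂²). Hence the dot-then-exponential Softmax attention kernel exp(⟨z_i, z_j⟩/√d) of Transformers is the derivative of a non-decreasing concave penalty evaluated at the squared distance, so a sequence of Softmax attention layers corresponds to descent on an associated regularized energy. -/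

import Mathlib

open Finset

/-- properties of the Transformer Softmax-attention penalty
`δ_T(u) = −2√d · exp((2 − u)/(2√d))` for a real `d > 0`: its derivative is
`exp((2 − u)/(2√d))`, strictly positive and strictly decreasing; `δ_T` is
strictly increasing and concave on `ℝ`; and for unit vectors `z_i, z_j`, the
dot-then-exponential kernel `exp(⟨z_i, z_j⟩/√d)` equals
`δ_T′(‖z_i − z_j‖²)`. -/
theorem stmt_17 (dr : ℝ) (hdr : 0 < dr) (m : ℕ) (zi zj : Fin m → ℝ)
    (hzi : ∑ c, (zi c) ^ 2 = 1) (hzj : ∑ c, (zj c) ^ 2 = 1) :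
    (∀ u : ℝ, HasDerivAt
        (fun v : ℝ => -2 * Real.sqrt dr * Real.exp ((2 - v) / (2 * Real.sqrt dr)))
        (Real.exp ((2 - u) / (2 * Real.sqrt dr))) u)
    ∧ (∀ u : ℝ, 0 < Real.exp ((2 - u) / (2 * Real.sqrt dr)))
    ∧ StrictAnti (fun u : ℝ => Real.exp ((2 - u) / (2 * Real.sqrt dr)))
    ∧ StrictMono (fun v : ℝ =>
        -2 * Real.sqrt dr * Real.exp ((2 - v) / (2 * Real.sqrt dr)))
    ∧ ConcaveOn ℝ Set.univ (fun v : ℝ =>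
        -2 * Real.sqrt dr * Real.exp ((2 - v) / (2 * Real.sqrt dr)))
    ∧ Real.exp ((∑ c, zi c * zj c) / Real.sqrt dr)
        = Real.exp ((2 - ∑ c, (zi c - zj c) ^ 2) / (2 * Real.sqrt dr)) := by
  have hs : 0 < Real.sqrt dr := Real.sqrt_pos.mpr hdr
  have hs2 : (0:ℝ) < 2 * Real.sqrt dr := by positivity
  have hderiv : ∀ u : ℝ, HasDerivAt
      (fun v : ℝ => -2 * Real.sqrt dr * Real.exp ((2 - v) / (2 * Real.sqrt dr)))
      (Real.exp ((2 - u) / (2 * Real.sqrt dr))) u := by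
    intro u
    have h1 : HasDerivAt (fun v : ℝ => (2 - v) / (2 * Real.sqrt dr))
        (-1 / (2 * Real.sqrt dr)) u := by
      have := ((hasDerivAt_id u).const_sub 2).div_const (2 * Real.sqrt dr)
      simpa using this
    have h2 := (h1.exp).const_mul (-2 * Real.sqrt dr)
    refine h2.congr_deriv ?_
    field_simp
  refine ⟨hderiv, fun u => Real.exp_pos _, ?_, ?_, ?_, ?_⟩
  · intro a b hab
    exact Real.exp_lt_exp.mpr ((div_lt_div_iff_of_pos_right hs2).mpr (by linarith))
  · exact strictMono_of_deriv_pos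
      (fun x => by rw [(hderiv x).deriv]; exact Real.exp_pos _)
  · refine ⟨convex_univ, fun x _ y _ a b ha hb hab => ?_⟩
    have key : (2 - (a • x + b • y)) / (2 * Real.sqrt dr)
        = a * ((2 - x) / (2 * Real.sqrt dr)) + b * ((2 - y) / (2 * Real.sqrt dr)) := by
      field_simp
      ring_nf
      nlinarith [hab]
    have hc := convexOn_exp.2 (Set.mem_univ ((2 - x) / (2 * Real.sqrt dr)))
      (Set.mem_univ ((2 - y) / (2 * Real.sqrt dr))) ha hb hab
    simp only [smul_eq_mul] at *
    rw [key]
    nlinarith [hs]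
  · congr 1
    have expand : ∑ c, (zi c - zj c) ^ 2
        = (∑ c, (zi c) ^ 2) + (∑ c, (zj c) ^ 2) - 2 * ∑ c, zi c * zj c := by
      have h : ∀ c, (zi c - zj c) ^ 2 = zi c ^ 2 + zj c ^ 2 - 2 * (zi c * zj c) :=
        fun c => by ring
      simp [h, Finset.sum_sub_distrib, Finset.sum_add_distrib, Finset.mul_sum]
    rw [expand, hzi, hzj]
    field_simp
    ring
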